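/- Under the hypotheses of the dual bound: for any density matrix ρ on H, subspace T of self-adjoint traceless operators, positive quadratic form g on T, any locally unbiased measurement M (a positive-operator-valued measure on T with ∫ x tr(M(dx)ρ) = 0 and ∫ tr(a(x)M(dx)) = tr a for all a ∈ End(T)) and any (a, S) with g(x,x)ρ − S − a(x) ≥ 0 for all x ∈ T, one has ∫ g(x,x) tr(M(dx)ρ) ≥ tr_T a + tr_H S. -/

import Mathlib

open MeasureTheory

noncomputable section

/-- Trace of a continuous linear operator on the finite-dimensional Hilbert
space `EuclideanSpace ℂ (Fin d)`. -/
def clmTrace {d : ℕ}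
    (A : EuclideanSpace ℂ (Fin d) →L[ℂ] EuclideanSpace ℂ (Fin d)) : ℂ :=
  LinearMap.trace ℂ (EuclideanSpace ℂ (Fin d))
    (A : EuclideanSpace ℂ (Fin d) →ₗ[ℂ] EuclideanSpace ℂ (Fin d))

abbrev Hs (d : ℕ) := EuclideanSpace ℂ (Fin d)

lemma trace_ob {d n : ℕ} (b : OrthonormalBasis (Fin n) ℂ (Hs d)) (A : Hs d →ₗ[ℂ] Hs d) :
    LinearMap.trace ℂ (Hs d) A = ∑ i, inner ℂ (b i) (A (b i)) := by
  rw [LinearMap.trace_eq_matrix_trace ℂ b.toBasis, Matrix.trace]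
  refine Finset.sum_congr rfl fun i _ => ?_
  rw [Matrix.diag_apply, LinearMap.toMatrix_apply, b.coe_toBasis_repr_apply,
    b.repr_apply_apply, OrthonormalBasis.coe_toBasis]

lemma trace_pos_comp {d : ℕ} {A B : Hs d →L[ℂ] Hs d}
    (hA : A.IsPositive) (hB : B.IsPositive) :
    0 ≤ (clmTrace (A ∘L B)).re := by
  have hBsym : (B : Hs d →ₗ[ℂ] Hs d).IsSymmetric :=
    (ContinuousLinearMap.isSelfAdjoint_iff_isSymmetric).mp hB.isSelfAdjoint
  set n := Module.finrank ℂ (Hs d) with hn'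
  have hn : Module.finrank ℂ (Hs d) = n := rfl
  set b := hBsym.eigenvectorBasis hn with hb
  rw [clmTrace, trace_ob b]
  rw [Complex.re_sum]
  apply Finset.sum_nonneg
  intro i _
  have h1 : (A ∘L B : Hs d →L[ℂ] Hs d) (b i)
      = (hBsym.eigenvalues hn i : ℂ) • A (b i) := by
    have h0 := hBsym.apply_eigenvectorBasis hn i
    rw [← hb] at h0
    simp only [ContinuousLinearMap.coe_coe] at h0
    rw [ContinuousLinearMap.comp_apply, h0, _root_.map_smul]; rfl
  rw [ContinuousLinearMap.coe_coe, h1, inner_smul_right]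
  have hev : 0 ≤ hBsym.eigenvalues hn i :=
    eigenvalue_nonneg_of_nonneg (hBsym.hasEigenvalue_eigenvalues hn i)
      (fun x => by simpa using (Complex.nonneg_iff.mp (hB.inner_nonneg_right x)).1)
  rw [Complex.re_ofReal_mul]
  exact mul_nonneg hev (by simpa using (Complex.nonneg_iff.mp (hA.inner_nonneg_right (b i))).1)

lemma trace_comp_swap {d : ℕ} (A B : Hs d →L[ℂ] Hs d) :
    clmTrace (A ∘L B) = clmTrace (B ∘L A) := by
  show LinearMap.trace ℂ (Hs d) ((A : Hs d →ₗ[ℂ] Hs d) ∘ₗ B)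
    = LinearMap.trace ℂ (Hs d) ((B : Hs d →ₗ[ℂ] Hs d) ∘ₗ A)
  rw [← Module.End.mul_eq_comp, ← Module.End.mul_eq_comp, LinearMap.trace_mul_comm]

/-- `A ↦ clmTrace (A ∘L S)` as a continuous ℂ-linear map. -/
def trComp {d : ℕ} (S : Hs d →L[ℂ] Hs d) : (Hs d →L[ℂ] Hs d) →L[ℂ] ℂ :=
  LinearMap.toContinuousLinearMap
  { toFun := fun A => clmTrace (A ∘L S)
    map_add' := by
      intro A B
      simp [clmTrace, ContinuousLinearMap.add_comp]
    map_smul' := by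
      intro c A
      simp [clmTrace, ContinuousLinearMap.smul_comp] }


/-- weak duality for the Cramér–Rao dual problem: `ρ` a density
matrix on the finite-dimensional `H`, `T` a subspace of traceless self-adjoint
operators (realized by the embedding `ι`), `g` a positive quadratic form on `T`.
A POVM `M` on `T` is encoded by its density: `M(dx) = m x ν(dx)` with `m x ≥ 0`
and `∫ m dν = Id`.  If `M` is locally unbiased
(`∫ x tr(M(dx)ρ) = 0` and `∫ tr(a(x) M(dx)) = tr a` for all `a ∈ End T`) and
`(a, S)` satisfies `g(x,x)ρ − S − a(x) ≥ 0` for all `x ∈ T`, then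
`∫ g(x,x) tr(M(dx)ρ) ≥ tr_T a + tr_H S`. -/
theorem stmt15 (d : ℕ)
    (ρ : EuclideanSpace ℂ (Fin d) →L[ℂ] EuclideanSpace ℂ (Fin d))
    (hρpos : ρ.IsPositive) (hρtr : clmTrace ρ = 1)
    (T : Type*) [NormedAddCommGroup T] [NormedSpace ℝ T] [FiniteDimensional ℝ T]
    [MeasurableSpace T] [BorelSpace T]
    (ι : T →L[ℝ] EuclideanSpace ℂ (Fin d) →L[ℂ] EuclideanSpace ℂ (Fin d))
    (hι : Function.Injective ι)
    (hTsa : ∀ x : T, IsSelfAdjoint (ι x))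
    (hTtr : ∀ x : T, clmTrace (ι x) = 0)
    (g : T →ₗ[ℝ] T →ₗ[ℝ] ℝ) (hgsymm : ∀ x y, g x y = g y x)
    (hgpos : ∀ x : T, x ≠ 0 → 0 < g x x)
    -- the measurement `M(dx) = m x ν(dx)`
    (ν : Measure T)
    (m : T → EuclideanSpace ℂ (Fin d) →L[ℂ] EuclideanSpace ℂ (Fin d))
    (hm : ∀ x, (m x).IsPositive) (hmint : Integrable m ν)
    (hPOVM : ∫ x, m x ∂ν = 1)
    -- local unbiasedness
    (hmeanint : Integrable (fun x => (clmTrace (m x ∘L ρ)).re • x) ν)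
    (hmean : ∫ x, (clmTrace (m x ∘L ρ)).re • x ∂ν = 0)
    (hubint : ∀ a : T →ₗ[ℝ] T,
      Integrable (fun x => (clmTrace (ι (a x) ∘L m x)).re) ν)
    (hub : ∀ a : T →ₗ[ℝ] T,
      ∫ x, (clmTrace (ι (a x) ∘L m x)).re ∂ν = LinearMap.trace ℝ T a)
    -- the Lagrange multiplier pair `(a, S)`
    (a : T →ₗ[ℝ] T)
    (S : EuclideanSpace ℂ (Fin d) →L[ℂ] EuclideanSpace ℂ (Fin d))
    (hS : IsSelfAdjoint S)
    (hR : ∀ x : T, ((g x x : ℂ) • ρ - S - ι (a x)).IsPositive)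
    (hdevint : Integrable (fun x => g x x * (clmTrace (m x ∘L ρ)).re) ν) :
    LinearMap.trace ℝ T a + (clmTrace S).re ≤
      ∫ x, g x x * (clmTrace (m x ∘L ρ)).re ∂ν := by
  classical
  -- the continuous real-linear functional `A ↦ (clmTrace (A ∘L S)).re`
  set trS : (Hs d →L[ℂ] Hs d) →L[ℝ] ℝ :=
    Complex.reCLM.comp ((trComp S).restrictScalars ℝ) with htrS
  have htrSapp : ∀ A, trS A = (clmTrace (A ∘L S)).re := fun A => rfl
  have hint1 : Integrable (fun x => trS (m x)) ν := trS.integrable_comp hmint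
  have hS1 : ∫ x, trS (m x) ∂ν = (clmTrace S).re := by
    rw [trS.integral_comp_comm hmint, hPOVM, htrSapp, ContinuousLinearMap.one_def,
      ContinuousLinearMap.id_comp]
  -- pointwise inequality
  have key : ∀ x, trS (m x) + (clmTrace (ι (a x) ∘L m x)).re
      ≤ g x x * (clmTrace (m x ∘L ρ)).re := by
    intro x
    have h0 := trace_pos_comp (hm x) (hR x)
    have expand : clmTrace (m x ∘L ((g x x : ℂ) • ρ - S - ι (a x)))
        = (g x x : ℂ) * clmTrace (m x ∘L ρ) - clmTrace (m x ∘L S)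
          - clmTrace (m x ∘L ι (a x)) := by
      simp only [clmTrace, ContinuousLinearMap.comp_sub, ContinuousLinearMap.comp_smul,
        ContinuousLinearMap.coe_sub, ContinuousLinearMap.coe_smul, map_sub, _root_.map_smul,
        smul_eq_mul]
    rw [expand] at h0
    rw [trace_comp_swap (ι (a x)) (m x), htrSapp]
    simp only [Complex.sub_re, Complex.re_ofReal_mul] at h0
    linarith
  have hintL : Integrable (fun x => trS (m x) + (clmTrace (ι (a x) ∘L m x)).re) ν :=
    hint1.add (hubint a)
  have hmono := integral_mono hintL hdevint key
  rw [integral_add hint1 (hubint a), hS1, hub a] at hmono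
  linarith

end
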